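/- For all nonnegative integers p and q, ∑_{v=0}^{2q+1} ∑_{s=p+q+2-v}^{2p+2q+2-v} (-1)^v · C(2q+1, v) · C(2p+1, s) = - ∑_{v=0}^{2q} (-1)^v · C(2q, v) · C(2p+1, p+q+1-v). -/
import Mathlib


/-- Binomial coefficient `C(a,b)` with integer lower index, equal to `0` when
`b < 0` (and when `b > a`, via `Nat.choose`). -/
noncomputable def chooseZ (a : ℕ) (b : ℤ) : ℝ :=
  if 0 ≤ b then (a.choose b.toNat : ℝ) else 0

/-- `T(p,q) = (2p+1)!(2q)!/(p! q! (p+q+1)!)`. -/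
noncomputable def Tcat (p q : ℕ) : ℝ :=
  (((2 * p + 1).factorial : ℝ) * ((2 * q).factorial : ℝ)) /
    ((p.factorial : ℝ) * (q.factorial : ℝ) * ((p + q + 1).factorial : ℝ))

private lemma aux_sum (n : ℕ) (G : ℕ → ℝ) :
    ∑ v ∈ Finset.range (n + 1), (-1 : ℝ) ^ v * (n.choose v : ℝ) * G v
      = G 0 - ∑ v ∈ Finset.range n, (-1 : ℝ) ^ v * (n.choose (v + 1) : ℝ) * G (v + 1) := by
  rw [Finset.sum_range_succ']
  have h : ∀ v ∈ Finset.range n, (-1 : ℝ) ^ (v + 1) * (n.choose (v + 1) : ℝ) * G (v + 1)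
      = -((-1 : ℝ) ^ v * (n.choose (v + 1) : ℝ) * G (v + 1)) := fun v _ => by ring
  rw [Finset.sum_congr rfl h, Finset.sum_neg_distrib]
  simp only [pow_zero, Nat.choose_zero_right, Nat.cast_one, one_mul]
  ring

private lemma key_sum (n : ℕ) (G : ℕ → ℝ) :
    ∑ v ∈ Finset.range (n + 2), (-1 : ℝ) ^ v * ((n + 1).choose v : ℝ) * G v
      = - ∑ v ∈ Finset.range (n + 1),
          (-1 : ℝ) ^ v * (n.choose v : ℝ) * (G (v + 1) - G v) := by
  have hB : ∑ v ∈ Finset.range (n + 1), (-1 : ℝ) ^ v * (n.choose (v + 1) : ℝ) * G (v + 1)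
      = ∑ v ∈ Finset.range n, (-1 : ℝ) ^ v * (n.choose (v + 1) : ℝ) * G (v + 1) := by
    rw [Finset.sum_range_succ, Nat.choose_succ_self]
    simp
  rw [Finset.sum_range_succ']
  have h1 : ∀ v ∈ Finset.range (n + 1),
      (-1 : ℝ) ^ (v + 1) * ((n + 1).choose (v + 1) : ℝ) * G (v + 1)
        = -((-1 : ℝ) ^ v * (n.choose v : ℝ) * G (v + 1))
          + -((-1 : ℝ) ^ v * (n.choose (v + 1) : ℝ) * G (v + 1)) := by
    intro v _
    rw [Nat.choose_succ_succ]
    push_cast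
    ring
  rw [Finset.sum_congr rfl h1, Finset.sum_add_distrib, Finset.sum_neg_distrib,
    Finset.sum_neg_distrib, hB]
  have h2 : ∀ v ∈ Finset.range (n + 1), (-1 : ℝ) ^ v * (n.choose v : ℝ) * (G (v + 1) - G v)
      = (-1 : ℝ) ^ v * (n.choose v : ℝ) * G (v + 1)
        - (-1 : ℝ) ^ v * (n.choose v : ℝ) * G v := fun v _ => by ring
  conv_rhs => rw [Finset.sum_congr rfl h2]
  rw [Finset.sum_sub_distrib, aux_sum n G]
  simp only [pow_zero, Nat.choose_zero_right, Nat.cast_one, one_mul]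
  ring

/-- For all nonnegative integers `p, q`,
`∑_{v=0}^{2q+1} ∑_{s=p+q+2-v}^{2p+2q+2-v} (-1)^v C(2q+1, v) C(2p+1, s)
  = - ∑_{v=0}^{2q} (-1)^v C(2q, v) C(2p+1, p+q+1-v)`. -/
theorem double_sum_reduction (p q : ℕ) :
    ∑ v ∈ Finset.range (2 * q + 2),
        ∑ s ∈ Finset.Icc ((p : ℤ) + q + 2 - v) (2 * (p : ℤ) + 2 * q + 2 - v),
          (-1 : ℝ) ^ v * ((2 * q + 1).choose v : ℝ) * chooseZ (2 * p + 1) s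
      = - ∑ v ∈ Finset.range (2 * q + 1),
          (-1 : ℝ) ^ v * ((2 * q).choose v : ℝ) *
            chooseZ (2 * p + 1) ((p : ℤ) + q + 1 - v) := by
  set G : ℕ → ℝ := fun v =>
    ∑ s ∈ Finset.Icc ((p : ℤ) + q + 2 - v) (2 * (p : ℤ) + 2 * q + 2), chooseZ (2 * p + 1) s
    with hG
  have hzero : ∀ s : ℤ, 2 * (p : ℤ) + 1 < s → chooseZ (2 * p + 1) s = 0 := by
    intro s hs
    unfold chooseZ
    rw [if_pos (by omega), Nat.choose_eq_zero_of_lt (by omega)]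
    simp
  have hinner : ∀ v ∈ Finset.range (2 * q + 2),
      ∑ s ∈ Finset.Icc ((p : ℤ) + q + 2 - v) (2 * (p : ℤ) + 2 * q + 2 - v),
          (-1 : ℝ) ^ v * ((2 * q + 1).choose v : ℝ) * chooseZ (2 * p + 1) s
        = (-1 : ℝ) ^ v * ((2 * q + 1).choose v : ℝ) * G v := by
    intro v hv
    rw [Finset.mem_range] at hv
    rw [hG, Finset.mul_sum]
    apply Finset.sum_subset
    · apply Finset.Icc_subset_Icc_right; omega
    · intro s hs hns
      rw [Finset.mem_Icc] at hs
      rw [Finset.mem_Icc] at hns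
      push_neg at hns
      rw [hzero s (by omega)]
      ring
  have hstep : ∀ v : ℕ, G (v + 1) - G v = chooseZ (2 * p + 1) ((p : ℤ) + q + 1 - v) := by
    intro v
    have hcast : ((p : ℤ) + q + 2 - ((v : ℕ) + 1 : ℕ)) = (p : ℤ) + q + 1 - v := by
      push_cast; ring
    have e1 : Finset.Icc ((p : ℤ) + q + 1 - v) (2 * (p : ℤ) + 2 * q + 2)
        = insert ((p : ℤ) + q + 1 - v)
            (Finset.Icc ((p : ℤ) + q + 2 - v) (2 * (p : ℤ) + 2 * q + 2)) := by
      ext s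
      simp only [Finset.mem_Icc, Finset.mem_insert]
      omega
    have e2 : ((p : ℤ) + q + 1 - v) ∉
        Finset.Icc ((p : ℤ) + q + 2 - v) (2 * (p : ℤ) + 2 * q + 2) := by
      simp only [Finset.mem_Icc]
      omega
    simp only [hG, hcast]
    rw [e1, Finset.sum_insert e2]
    ring
  rw [Finset.sum_congr rfl hinner]
  have := key_sum (2 * q) G
  rw [show 2 * q + 2 = (2 * q) + 2 from rfl]
  rw [this]
  congr 1
  apply Finset.sum_congr rfl
  intro v _
  rw [hstep v]
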